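/- Intersection of a DBM with an atomic constraint: let M be a DBM in normal form, let g be the constraint x_i − x_j ≤ c for indices 0 ≤ i, j ≤ n and c ∈ ℤ, and suppose ⟦M⟧ ∩ ⟦g⟧ ≠ ∅. Then the DBM M' defined by m'_{k,ℓ} = min(m_{k,ℓ}, m_{k,i} + c + m_{j,ℓ}) for all 0 ≤ k, ℓ ≤ n satisfies ⟦M'⟧ = ⟦M⟧ ∩ ⟦g⟧, and M' is in normal form. -/

import Mathlib

namespace DBMs

/-- A DBM over `n` clocks: an `(n+1)×(n+1)` matrix with entries in `ℤ ∪ {∞}`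
(all constraints are non-strict). -/
abbrev DBM (n : ℕ) := Fin (n+1) → Fin (n+1) → WithTop ℤ

/-- `v̄` extends a valuation by `v̄(x₀) = 0`. -/
def vbar {n : ℕ} (v : Fin n → NNReal) : Fin (n+1) → ℝ :=
  Fin.cases 0 (fun i => (v i : ℝ))

/-- `r ≤ m` for a real `r` and `m ∈ ℤ ∪ {∞}` (always true for `m = ∞`). -/
def rleq (r : ℝ) (m : WithTop ℤ) : Prop := ∀ c : ℤ, m = (c : WithTop ℤ) → r ≤ (c : ℝ)

/-- The zone `⟦M⟧` of a DBM. -/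
def dbmZone {n : ℕ} (M : DBM n) : Set (Fin n → NNReal) :=
  {v | ∀ i j : Fin (n+1), rleq (vbar v i - vbar v j) (M i j)}

/-- The weight of the path `c 0, c 1, …, c p` in the adjacency graph of `M`. -/
def pathWeight {n : ℕ} (M : DBM n) (p : ℕ) (c : ℕ → Fin (n+1)) : WithTop ℤ :=
  ∑ k ∈ Finset.range p, M (c k) (c (k+1))

/-- The adjacency graph of `M` has a cycle of finite, strictly negative weight. -/
def HasNegCycle {n : ℕ} (M : DBM n) : Prop :=
  ∃ (p : ℕ) (c : ℕ → Fin (n+1)), 1 ≤ p ∧ c p = c 0 ∧ pathWeight M p c < 0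

/-- `P` is the shortest-path closure `φ(M)`: each `P i j` is the minimum of the
weights of the finite paths from `i` to `j` in the adjacency graph of `M`. -/
def IsClosure {n : ℕ} (M P : DBM n) : Prop :=
  ∀ i j : Fin (n+1),
    IsLeast {w | ∃ (p : ℕ) (c : ℕ → Fin (n+1)), c 0 = i ∧ c p = j ∧ w = pathWeight M p c}
      (P i j)

/-- `M` is in normal form: no negative cycle and `M = φ(M)`. -/
def InNormalForm {n : ℕ} (M : DBM n) : Prop := ¬ HasNegCycle M ∧ IsClosure M M

/-- Future (time elapse) of a set of valuations. -/
def futureZ {n : ℕ} (W : Set (Fin n → NNReal)) : Set (Fin n → NNReal) :=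
  {w | ∃ v ∈ W, ∃ δ : NNReal, w = fun k => v k + δ}

end DBMs
open DBMs

/-- intersection of a normal-form DBM with an atomic constraint
`x_i - x_j ≤ c`. -/
lemma rleq_coe_iff {r : ℝ} {d : ℤ} : rleq r (d : WithTop ℤ) ↔ r ≤ (d : ℝ) := by
  constructor
  · intro h; exact h d rfl
  · intro h e he
    have : d = e := by exact_mod_cast he
    subst this; exact h

lemma rleq_mono {r : ℝ} {a b : WithTop ℤ} (hab : a ≤ b) (h : rleq r a) : rleq r b := by
  intro e he
  subst he
  obtain ⟨d, hd, hde⟩ := WithTop.le_coe_iff.mp hab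
  exact le_trans (h d hd) (by exact_mod_cast hde)

lemma rleq_add {r s : ℝ} {a b : WithTop ℤ} (ha : rleq r a) (hb : rleq s b) :
    rleq (r + s) (a + b) := by
  intro e he
  obtain ⟨d₁, d₂, h₁, h₂, h₃⟩ := WithTop.add_eq_coe.mp he
  have := add_le_add (ha d₁ h₁.symm) (hb d₂ h₂.symm)
  calc r + s ≤ (d₁ : ℝ) + d₂ := this
    _ = (e : ℝ) := by exact_mod_cast congrArg (Int.cast : ℤ → ℝ) h₃

lemma rleq_min {r : ℝ} {a b : WithTop ℤ} (ha : rleq r a) (hb : rleq r b) :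
    rleq r (min a b) := by
  rcases min_cases a b with ⟨h, _⟩ | ⟨h, _⟩ <;> rw [h] <;> assumption

lemma diag_eq_zero {n : ℕ} {M : DBM n} (hM : InNormalForm M) (k : Fin (n+1)) : M k k = 0 := by
  have hle : M k k ≤ 0 := (hM.2 k k).2 ⟨0, fun _ => k, rfl, rfl, by simp [pathWeight]⟩
  have hge : ¬ M k k < 0 := fun h =>
    hM.1 ⟨1, fun _ => k, le_refl 1, rfl, by simpa [pathWeight] using h⟩
  exact le_antisymm hle (not_lt.mp hge)

lemma tri {n : ℕ} {M : DBM n} (hM : InNormalForm M) (k m l : Fin (n+1)) :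
    M k l ≤ M k m + M m l := by
  refine (hM.2 k l).2 ⟨2, fun t => if t = 0 then k else if t = 1 then m else l, by simp, by simp, ?_⟩
  simp [pathWeight, Finset.sum_range_succ]

lemma pathWeight_lower {n : ℕ} {M : DBM n}
    (htri : ∀ k m l : Fin (n+1), M k l ≤ M k m + M m l)
    (hdiag : ∀ k : Fin (n+1), M k k ≤ 0) :
    ∀ (p : ℕ) (ch : ℕ → Fin (n+1)), M (ch 0) (ch p) ≤ pathWeight M p ch := by
  intro p
  induction p with
  | zero => intro ch; simpa [pathWeight] using hdiag (ch 0)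
  | succ p ih =>
      intro ch
      rw [pathWeight, Finset.sum_range_succ]
      exact le_trans (htri (ch 0) (ch p) (ch (p+1)))
        (add_le_add_left (ih ch) _)

theorem dbm_intersection {n : ℕ} (M : DBM n) (hM : InNormalForm M)
    (i j : Fin (n+1)) (c : ℤ) (M' : DBM n)
    (hM' : ∀ k l : Fin (n+1), M' k l = min (M k l) (M k i + (c : WithTop ℤ) + M j l))
    (hne : dbmZone M ∩ {v | vbar v i - vbar v j ≤ (c : ℝ)} ≠ ∅) :
    dbmZone M' = dbmZone M ∩ {v | vbar v i - vbar v j ≤ (c : ℝ)} ∧ InNormalForm M' := by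
  obtain ⟨v₀, hv₀M, hv₀c⟩ := Set.nonempty_iff_ne_empty.mpr hne
  -- key nonnegativity fact
  have hji : (0 : WithTop ℤ) ≤ M j i + (c : WithTop ℤ) := by
    cases hMji : M j i with
    | top => simp [top_add]
    | coe d =>
        have hc' : vbar v₀ i - vbar v₀ j ≤ (c : ℝ) := hv₀c
        have hd : vbar v₀ j - vbar v₀ i ≤ (d : ℝ) := hv₀M j i d (by exact_mod_cast hMji)
        have hz : (0 : ℤ) ≤ d + c := by
          have : (0 : ℝ) ≤ (d : ℝ) + (c : ℝ) := by linarith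
          exact_mod_cast this
        exact_mod_cast hz
  -- forward inclusion : zone M ∩ g ⊆ zone M'
  have hsub : dbmZone M ∩ {v | vbar v i - vbar v j ≤ (c : ℝ)} ⊆ dbmZone M' := by
    rintro v ⟨hvM, hvc⟩ k l
    rw [hM' k l]
    refine rleq_min (hvM k l) ?_
    have heq : vbar v k - vbar v l =
        ((vbar v k - vbar v i) + (vbar v i - vbar v j)) + (vbar v j - vbar v l) := by ring
    rw [heq]
    exact rleq_add (rleq_add (hvM k i) (rleq_coe_iff.mpr hvc)) (hvM j l)
  -- reverse inclusion
  have hsub2 : dbmZone M' ⊆ dbmZone M ∩ {v | vbar v i - vbar v j ≤ (c : ℝ)} := by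
    intro v hv
    refine ⟨fun k l => rleq_mono (by rw [hM' k l]; exact min_le_left _ _) (hv k l), ?_⟩
    have hle : M' i j ≤ (c : WithTop ℤ) := by
      rw [hM' i j, diag_eq_zero hM i, diag_eq_zero hM j]
      simp only [zero_add, add_zero]
      exact min_le_right (M i j) _
    exact rleq_coe_iff.mp (rleq_mono hle (hv i j))
  have hzone : dbmZone M' = dbmZone M ∩ {v | vbar v i - vbar v j ≤ (c : ℝ)} :=
    Set.Subset.antisymm hsub2 hsub
  -- triangle inequality for M'
  have htri' : ∀ k m l : Fin (n+1), M' k l ≤ M' k m + M' m l := by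
    intro k m l
    have t1 : min (M k l) (M k i + (c : WithTop ℤ) + M j l) ≤ M k m + M m l :=
      le_trans (min_le_left _ _) (tri hM k m l)
    have t2 : min (M k l) (M k i + (c : WithTop ℤ) + M j l)
        ≤ M k m + (M m i + (c : WithTop ℤ) + M j l) := by
      refine le_trans (min_le_right _ _) ?_
      calc M k i + (c : WithTop ℤ) + M j l
          ≤ (M k m + M m i) + (c : WithTop ℤ) + M j l :=
            add_le_add_left (add_le_add_left (tri hM k m i) _) _
        _ = M k m + (M m i + (c : WithTop ℤ) + M j l) := by abel
    have t3 : min (M k l) (M k i + (c : WithTop ℤ) + M j l)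
        ≤ (M k i + (c : WithTop ℤ) + M j m) + M m l := by
      refine le_trans (min_le_right _ _) ?_
      calc M k i + (c : WithTop ℤ) + M j l
          ≤ M k i + (c : WithTop ℤ) + (M j m + M m l) := add_le_add_right (tri hM j m l) _
        _ = (M k i + (c : WithTop ℤ) + M j m) + M m l := by abel
    have t4 : min (M k l) (M k i + (c : WithTop ℤ) + M j l)
        ≤ (M k i + (c : WithTop ℤ) + M j m) + (M m i + (c : WithTop ℤ) + M j l) := by
      refine le_trans (min_le_right _ _) ?_
      calc M k i + (c : WithTop ℤ) + M j l
          = (M k i + (c : WithTop ℤ) + M j l) + 0 := (add_zero _).symm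
        _ ≤ (M k i + (c : WithTop ℤ) + M j l) + (M j i + (c : WithTop ℤ)) :=
            add_le_add_right hji _
        _ ≤ (M k i + (c : WithTop ℤ) + M j l) + ((M j m + M m i) + (c : WithTop ℤ)) :=
            add_le_add_right (add_le_add_left (tri hM j m i) _) _
        _ = (M k i + (c : WithTop ℤ) + M j m) + (M m i + (c : WithTop ℤ) + M j l) := by
            abel
    rw [hM' k l, hM' k m, hM' m l]
    rcases min_cases (M k m) (M k i + (c : WithTop ℤ) + M j m) with ⟨h1, _⟩ | ⟨h1, _⟩ <;>
      rcases min_cases (M m l) (M m i + (c : WithTop ℤ) + M j l) with ⟨h2, _⟩ | ⟨h2, _⟩ <;>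
      rw [h1, h2]
    exacts [t1, t2, t3, t4]
  have hdiag' : ∀ k : Fin (n+1), M' k k ≤ 0 := by
    intro k
    rw [hM' k k]
    exact le_trans (min_le_left _ _) (diag_eq_zero hM k).le
  -- no negative cycle for M'
  have hv₀' : v₀ ∈ dbmZone M' := hsub ⟨hv₀M, hv₀c⟩
  have hnoneg : ¬ HasNegCycle M' := by
    rintro ⟨p, ch, hp1, hcyc, hneg⟩
    have hfin : ∀ k ∈ Finset.range p, M' (ch k) (ch (k+1)) ≠ ⊤ := by
      intro k hk hT
      have : pathWeight M' p ch = ⊤ := WithTop.sum_eq_top.mpr ⟨k, hk, hT⟩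
      rw [this] at hneg
      exact not_top_lt hneg
    set g : ℕ → ℤ := fun k => WithTop.untopD 0 (M' (ch k) (ch (k+1))) with hg
    have hgk : ∀ k ∈ Finset.range p, M' (ch k) (ch (k+1)) = ((g k : ℤ) : WithTop ℤ) := by
      intro k hk
      obtain ⟨d, hd⟩ := WithTop.ne_top_iff_exists.mp (hfin k hk)
      rw [← hd]
      simp [hg, ← hd]
    have hsum : pathWeight M' p ch = ((∑ k ∈ Finset.range p, g k : ℤ) : WithTop ℤ) := by
      rw [pathWeight, WithTop.coe_sum]
      exact Finset.sum_congr rfl hgk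
    have hS : (∑ k ∈ Finset.range p, g k) < 0 := by
      rw [hsum] at hneg
      exact_mod_cast hneg
    have hle : ∀ k ∈ Finset.range p, vbar v₀ (ch k) - vbar v₀ (ch (k+1)) ≤ (g k : ℝ) :=
      fun k hk => hv₀' (ch k) (ch (k+1)) (g k) (hgk k hk)
    have h0 : (0 : ℝ) ≤ ∑ k ∈ Finset.range p, (g k : ℝ) := by
      have htel : ∑ k ∈ Finset.range p, (vbar v₀ (ch k) - vbar v₀ (ch (k+1)))
          = vbar v₀ (ch 0) - vbar v₀ (ch p) :=
        Finset.sum_range_sub' (fun k => vbar v₀ (ch k)) p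
      calc (0 : ℝ) = vbar v₀ (ch 0) - vbar v₀ (ch p) := by rw [hcyc, sub_self]
        _ = ∑ k ∈ Finset.range p, (vbar v₀ (ch k) - vbar v₀ (ch (k+1))) := htel.symm
        _ ≤ ∑ k ∈ Finset.range p, (g k : ℝ) := Finset.sum_le_sum hle
    have : (0 : ℝ) ≤ ((∑ k ∈ Finset.range p, g k : ℤ) : ℝ) := by push_cast; exact h0
    have : (0 : ℤ) ≤ ∑ k ∈ Finset.range p, g k := by exact_mod_cast this
    omega
  -- closure for M'
  have hclo : IsClosure M' M' := by
    intro k l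
    constructor
    · refine ⟨1, fun t => if t = 0 then k else l, by simp, by simp, ?_⟩
      simp [pathWeight]
    · rintro w ⟨p, ch, h0, hp, rfl⟩
      have := pathWeight_lower htri' hdiag' p ch
      rw [h0, hp] at this
      exact this
  exact ⟨hzone, hnoneg, hclo⟩
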